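/- Suppose the vectors {X_j − X_i : (i,j) ∈ D} span EuclideanSpace ℝ (Fin p). Then the log partial likelihood L is strictly concave on EuclideanSpace ℝ (Fin p); in particular L has at most one global maximizer, so the maximum partial likelihood estimator, if it exists, is unique. -/

import Mathlib

open Finset

/-- The Cox log partial likelihood. -/
noncomputable def coxLogPartialLik (n p : ℕ) (Y : Fin n → ℝ) (Δ : Fin n → Bool)
    (X : Fin n → EuclideanSpace ℝ (Fin p)) (β : EuclideanSpace ℝ (Fin p)) : ℝ :=
  (1 / (n : ℝ)) * ∑ i ∈ Finset.univ.filter (fun i => Δ i = true),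
    ((inner ℝ (X i) β : ℝ) -
      Real.log ((1 / (n : ℝ)) * ∑ j ∈ Finset.univ.filter (fun j => Y i ≤ Y j),
        Real.exp (inner ℝ (X j) β : ℝ)))

lemma young_lt {x y t u : ℝ} (hx : 0 < x) (hy : 0 < y) (hxy : x ≠ y)
    (ht : 0 < t) (hu : 0 < u) (htu : t + u = 1) :
    Real.exp (t * Real.log x + u * Real.log y) < t * x + u * y := by
  have h := strictConcaveOn_log_Ioi.2 (Set.mem_Ioi.2 hx) (Set.mem_Ioi.2 hy) hxy ht hu htu
  have hpos : 0 < t * x + u * y := by positivity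
  calc Real.exp (t * Real.log x + u * Real.log y)
      < Real.exp (Real.log (t * x + u * y)) := by
        apply Real.exp_lt_exp.2; simpa [smul_eq_mul] using h
    _ = t * x + u * y := Real.exp_log hpos

lemma young_le {x y t u : ℝ} (hx : 0 < x) (hy : 0 < y)
    (ht : 0 < t) (hu : 0 < u) (htu : t + u = 1) :
    Real.exp (t * Real.log x + u * Real.log y) ≤ t * x + u * y := by
  rcases eq_or_ne x y with rfl | hxy
  · rw [← add_mul, htu, one_mul, Real.exp_log hx, ← add_mul, htu, one_mul]
  · exact (young_lt hx hy hxy ht hu htu).le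

lemma sum_exp_combo_le {ι : Type*} (s : Finset ι) (hs : s.Nonempty) (a b : ι → ℝ) {t u : ℝ}
    (ht : 0 < t) (hu : 0 < u) (htu : t + u = 1) :
    ∑ j ∈ s, Real.exp (t * a j + u * b j) ≤
      Real.exp (t * Real.log (∑ j ∈ s, Real.exp (a j)) +
        u * Real.log (∑ j ∈ s, Real.exp (b j))) := by
  set A := ∑ j ∈ s, Real.exp (a j) with hAdef
  set B := ∑ j ∈ s, Real.exp (b j) with hBdef
  have hA : 0 < A := Finset.sum_pos (fun j _ => Real.exp_pos _) hs
  have hB : 0 < B := Finset.sum_pos (fun j _ => Real.exp_pos _) hs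
  have key : ∀ j ∈ s, Real.exp (t * a j + u * b j) ≤
      Real.exp (t * Real.log A + u * Real.log B) *
        (t * (Real.exp (a j) / A) + u * (Real.exp (b j) / B)) := by
    intro j _
    have hp : 0 < Real.exp (a j) / A := by positivity
    have hq : 0 < Real.exp (b j) / B := by positivity
    have h1 : t * a j + u * b j = (t * Real.log A + u * Real.log B) +
        (t * Real.log (Real.exp (a j) / A) + u * Real.log (Real.exp (b j) / B)) := by
      rw [Real.log_div (Real.exp_ne_zero _) hA.ne', Real.log_div (Real.exp_ne_zero _) hB.ne',
        Real.log_exp, Real.log_exp]; ring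
    rw [h1, Real.exp_add]
    exact mul_le_mul_of_nonneg_left (young_le hp hq ht hu htu) (Real.exp_pos _).le
  have hsum1 : ∑ j ∈ s, (t * (Real.exp (a j) / A) + u * (Real.exp (b j) / B)) = 1 := by
    rw [Finset.sum_add_distrib, ← Finset.mul_sum, ← Finset.mul_sum, ← Finset.sum_div,
      ← Finset.sum_div, ← hAdef, ← hBdef, div_self hA.ne', div_self hB.ne',
      mul_one, mul_one, htu]
  calc ∑ j ∈ s, Real.exp (t * a j + u * b j)
      ≤ ∑ j ∈ s, Real.exp (t * Real.log A + u * Real.log B) *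
          (t * (Real.exp (a j) / A) + u * (Real.exp (b j) / B)) := Finset.sum_le_sum key
    _ = Real.exp (t * Real.log A + u * Real.log B) := by
        rw [← Finset.mul_sum, hsum1, mul_one]

lemma sum_exp_combo_lt {ι : Type*} (s : Finset ι) (a b : ι → ℝ) {t u : ℝ}
    (ht : 0 < t) (hu : 0 < u) (htu : t + u = 1)
    {j₀ k₀ : ι} (hj₀ : j₀ ∈ s) (hk₀ : k₀ ∈ s) (hw : a j₀ - b j₀ ≠ a k₀ - b k₀) :
    ∑ j ∈ s, Real.exp (t * a j + u * b j) <
      Real.exp (t * Real.log (∑ j ∈ s, Real.exp (a j)) +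
        u * Real.log (∑ j ∈ s, Real.exp (b j))) := by
  have hs : s.Nonempty := ⟨j₀, hj₀⟩
  set A := ∑ j ∈ s, Real.exp (a j) with hAdef
  set B := ∑ j ∈ s, Real.exp (b j) with hBdef
  have hA : 0 < A := Finset.sum_pos (fun j _ => Real.exp_pos _) hs
  have hB : 0 < B := Finset.sum_pos (fun j _ => Real.exp_pos _) hs
  have hne : Real.exp (a j₀) / A ≠ Real.exp (b j₀) / B ∨
      Real.exp (a k₀) / A ≠ Real.exp (b k₀) / B := by
    by_contra h
    push_neg at h
    obtain ⟨h1, h2⟩ := h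
    have e1 : a j₀ - Real.log A = b j₀ - Real.log B := by
      have := congrArg Real.log h1
      rwa [Real.log_div (Real.exp_ne_zero _) hA.ne', Real.log_div (Real.exp_ne_zero _) hB.ne',
        Real.log_exp, Real.log_exp] at this
    have e2 : a k₀ - Real.log A = b k₀ - Real.log B := by
      have := congrArg Real.log h2
      rwa [Real.log_div (Real.exp_ne_zero _) hA.ne', Real.log_div (Real.exp_ne_zero _) hB.ne',
        Real.log_exp, Real.log_exp] at this
    exact hw (by linarith)
  have key : ∀ j ∈ s, Real.exp (t * a j + u * b j) ≤
      Real.exp (t * Real.log A + u * Real.log B) *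
        (t * (Real.exp (a j) / A) + u * (Real.exp (b j) / B)) := by
    intro j _
    have hp : 0 < Real.exp (a j) / A := by positivity
    have hq : 0 < Real.exp (b j) / B := by positivity
    have h1 : t * a j + u * b j = (t * Real.log A + u * Real.log B) +
        (t * Real.log (Real.exp (a j) / A) + u * Real.log (Real.exp (b j) / B)) := by
      rw [Real.log_div (Real.exp_ne_zero _) hA.ne', Real.log_div (Real.exp_ne_zero _) hB.ne',
        Real.log_exp, Real.log_exp]; ring
    rw [h1, Real.exp_add]
    exact mul_le_mul_of_nonneg_left (young_le hp hq ht hu htu) (Real.exp_pos _).le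
  have keylt : ∀ j : ι, Real.exp (a j) / A ≠ Real.exp (b j) / B →
      Real.exp (t * a j + u * b j) <
      Real.exp (t * Real.log A + u * Real.log B) *
        (t * (Real.exp (a j) / A) + u * (Real.exp (b j) / B)) := by
    intro j hjne
    have hp : 0 < Real.exp (a j) / A := by positivity
    have hq : 0 < Real.exp (b j) / B := by positivity
    have h1 : t * a j + u * b j = (t * Real.log A + u * Real.log B) +
        (t * Real.log (Real.exp (a j) / A) + u * Real.log (Real.exp (b j) / B)) := by
      rw [Real.log_div (Real.exp_ne_zero _) hA.ne', Real.log_div (Real.exp_ne_zero _) hB.ne',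
        Real.log_exp, Real.log_exp]; ring
    rw [h1, Real.exp_add]
    exact mul_lt_mul_of_pos_left (young_lt hp hq hjne ht hu htu) (Real.exp_pos _)
  have hsum1 : ∑ j ∈ s, (t * (Real.exp (a j) / A) + u * (Real.exp (b j) / B)) = 1 := by
    rw [Finset.sum_add_distrib, ← Finset.mul_sum, ← Finset.mul_sum, ← Finset.sum_div,
      ← Finset.sum_div, ← hAdef, ← hBdef, div_self hA.ne', div_self hB.ne',
      mul_one, mul_one, htu]
  have hlt : ∑ j ∈ s, Real.exp (t * a j + u * b j) <
      ∑ j ∈ s, Real.exp (t * Real.log A + u * Real.log B) *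
        (t * (Real.exp (a j) / A) + u * (Real.exp (b j) / B)) := by
    rcases hne with h | h
    · exact Finset.sum_lt_sum key ⟨j₀, hj₀, keylt j₀ h⟩
    · exact Finset.sum_lt_sum key ⟨k₀, hk₀, keylt k₀ h⟩
  calc ∑ j ∈ s, Real.exp (t * a j + u * b j)
      < ∑ j ∈ s, Real.exp (t * Real.log A + u * Real.log B) *
          (t * (Real.exp (a j) / A) + u * (Real.exp (b j) / B)) := hlt
    _ = Real.exp (t * Real.log A + u * Real.log B) := by
        rw [← Finset.mul_sum, hsum1, mul_one]

lemma logsumexp_le {ι : Type*} (s : Finset ι) (hs : s.Nonempty) (a b : ι → ℝ) {t u : ℝ}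
    (ht : 0 < t) (hu : 0 < u) (htu : t + u = 1) :
    Real.log (∑ j ∈ s, Real.exp (t * a j + u * b j)) ≤
      t * Real.log (∑ j ∈ s, Real.exp (a j)) + u * Real.log (∑ j ∈ s, Real.exp (b j)) := by
  have hpos : 0 < ∑ j ∈ s, Real.exp (t * a j + u * b j) :=
    Finset.sum_pos (fun j _ => Real.exp_pos _) hs
  exact (Real.log_le_iff_le_exp hpos).2 (sum_exp_combo_le s hs a b ht hu htu)

lemma logsumexp_lt {ι : Type*} (s : Finset ι) (a b : ι → ℝ) {t u : ℝ}
    (ht : 0 < t) (hu : 0 < u) (htu : t + u = 1)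
    {j₀ k₀ : ι} (hj₀ : j₀ ∈ s) (hk₀ : k₀ ∈ s) (hw : a j₀ - b j₀ ≠ a k₀ - b k₀) :
    Real.log (∑ j ∈ s, Real.exp (t * a j + u * b j)) <
      t * Real.log (∑ j ∈ s, Real.exp (a j)) + u * Real.log (∑ j ∈ s, Real.exp (b j)) := by
  have hpos : 0 < ∑ j ∈ s, Real.exp (t * a j + u * b j) :=
    Finset.sum_pos (fun j _ => Real.exp_pos _) ⟨j₀, hj₀⟩
  exact (Real.log_lt_iff_lt_exp hpos).2 (sum_exp_combo_lt s a b ht hu htu hj₀ hk₀ hw)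

lemma combo_sum_lt {ι : Type*} (S : Finset ι) {c : ℝ} (hc : 0 < c) (F1 F2 F3 : ι → ℝ)
    {t u : ℝ} (hle : ∀ i ∈ S, t * F1 i + u * F2 i ≤ F3 i)
    (hlt : ∃ i ∈ S, t * F1 i + u * F2 i < F3 i) :
    t * (c * ∑ i ∈ S, F1 i) + u * (c * ∑ i ∈ S, F2 i) < c * ∑ i ∈ S, F3 i := by
  have h : ∑ i ∈ S, (t * F1 i + u * F2 i) < ∑ i ∈ S, F3 i := by
    obtain ⟨i₀, hi₀, hi₀lt⟩ := hlt
    exact Finset.sum_lt_sum hle ⟨i₀, hi₀, hi₀lt⟩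
  calc t * (c * ∑ i ∈ S, F1 i) + u * (c * ∑ i ∈ S, F2 i)
      = c * ∑ i ∈ S, (t * F1 i + u * F2 i) := by
        rw [Finset.sum_add_distrib, ← Finset.mul_sum, ← Finset.mul_sum]; ring
    _ < c * ∑ i ∈ S, F3 i := by exact mul_lt_mul_of_pos_left h hc

/-- If the difference vectors `{X j - X i : (i,j) ∈ D}` over the comparison set
`D = {(i,j) : Δ i = 1, Y j ≥ Y i, j ≠ i}` span `EuclideanSpace ℝ (Fin p)`, then the log
partial likelihood is strictly concave; in particular the MPLE, if it exists, is unique. -/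
theorem coxLogPartialLik_strictConcave (n p : ℕ) (hn : 1 ≤ n) (hp : 1 ≤ p)
    (Y : Fin n → ℝ) (Δ : Fin n → Bool) (X : Fin n → EuclideanSpace ℝ (Fin p))
    (hspan : Submodule.span ℝ
      {v : EuclideanSpace ℝ (Fin p) |
        ∃ i j : Fin n, Δ i = true ∧ Y i ≤ Y j ∧ j ≠ i ∧ v = X j - X i} = ⊤) :
    StrictConcaveOn ℝ Set.univ (coxLogPartialLik n p Y Δ X) ∧
    ∀ β₁ β₂ : EuclideanSpace ℝ (Fin p),
      (∀ β, coxLogPartialLik n p Y Δ X β ≤ coxLogPartialLik n p Y Δ X β₁) →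
      (∀ β, coxLogPartialLik n p Y Δ X β ≤ coxLogPartialLik n p Y Δ X β₂) →
      β₁ = β₂ := by
  have hn0 : (0 : ℝ) < (n : ℝ) := by
    have : (1 : ℝ) ≤ (n : ℝ) := by exact_mod_cast hn
    linarith
  have hc : (0 : ℝ) < 1 / (n : ℝ) := by positivity
  -- from the span hypothesis, any nonzero direction sees a comparison pair
  have hwit : ∀ d : EuclideanSpace ℝ (Fin p), d ≠ 0 →
      ∃ i j : Fin n, Δ i = true ∧ Y i ≤ Y j ∧ j ≠ i ∧ (inner ℝ (X j - X i) d : ℝ) ≠ 0 := by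
    intro d hd
    by_contra h
    push_neg at h
    have hmem : d ∈ Submodule.span ℝ
        {v : EuclideanSpace ℝ (Fin p) |
          ∃ i j : Fin n, Δ i = true ∧ Y i ≤ Y j ∧ j ≠ i ∧ v = X j - X i} := by
      rw [hspan]; exact Submodule.mem_top
    have hz : (inner ℝ d d : ℝ) = 0 := by
      refine Submodule.span_induction
        (p := fun v _ => (inner ℝ v d : ℝ) = 0) ?_ ?_ ?_ ?_ hmem
      · rintro v ⟨i, j, h1, h2, h3, rfl⟩
        exact h i j h1 h2 h3
      · exact inner_zero_left d
      · intro x y _ _ hx hy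
        rw [inner_add_left, hx, hy, add_zero]
      · intro a x _ hx
        rw [real_inner_smul_left, hx, mul_zero]
    exact hd (inner_self_eq_zero.1 hz)
  have hSC : StrictConcaveOn ℝ Set.univ (coxLogPartialLik n p Y Δ X) := by
    refine ⟨convex_univ, ?_⟩
    intro β₁ _ β₂ _ hne t u ht hu htu
    obtain ⟨i₀, j₀, hΔ₀, hY₀, hji₀, hin₀⟩ := hwit (β₁ - β₂) (sub_ne_zero.2 hne)
    have hinner : ∀ j : Fin n, (inner ℝ (X j) (t • β₁ + u • β₂) : ℝ) =
        t * (inner ℝ (X j) β₁ : ℝ) + u * (inner ℝ (X j) β₂ : ℝ) := by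
      intro j
      rw [inner_add_right, real_inner_smul_right, real_inner_smul_right]
    simp only [coxLogPartialLik, smul_eq_mul, hinner]
    have hRmem : ∀ i : Fin n, i ∈ Finset.univ.filter (fun j => Y i ≤ Y j) :=
      fun i => Finset.mem_filter.2 ⟨Finset.mem_univ _, le_refl _⟩
    have hlogc : t * Real.log (1 / (n : ℝ)) + u * Real.log (1 / (n : ℝ))
        = Real.log (1 / (n : ℝ)) := by rw [← add_mul, htu, one_mul]
    have hlog_le : ∀ i : Fin n,
        Real.log ((1 / (n : ℝ)) * ∑ j ∈ Finset.univ.filter (fun j => Y i ≤ Y j),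
            Real.exp (t * (inner ℝ (X j) β₁ : ℝ) + u * (inner ℝ (X j) β₂ : ℝ))) ≤
        t * Real.log ((1 / (n : ℝ)) * ∑ j ∈ Finset.univ.filter (fun j => Y i ≤ Y j),
            Real.exp ((inner ℝ (X j) β₁ : ℝ))) +
        u * Real.log ((1 / (n : ℝ)) * ∑ j ∈ Finset.univ.filter (fun j => Y i ≤ Y j),
            Real.exp ((inner ℝ (X j) β₂ : ℝ))) := by
      intro i
      have h1 := logsumexp_le (Finset.univ.filter (fun j => Y i ≤ Y j)) ⟨i, hRmem i⟩
        (fun j => (inner ℝ (X j) β₁ : ℝ)) (fun j => (inner ℝ (X j) β₂ : ℝ)) ht hu htu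
      have hA : (0:ℝ) < ∑ j ∈ Finset.univ.filter (fun j => Y i ≤ Y j),
          Real.exp ((inner ℝ (X j) β₁ : ℝ)) :=
        Finset.sum_pos (fun j _ => Real.exp_pos _) ⟨i, hRmem i⟩
      have hB : (0:ℝ) < ∑ j ∈ Finset.univ.filter (fun j => Y i ≤ Y j),
          Real.exp ((inner ℝ (X j) β₂ : ℝ)) :=
        Finset.sum_pos (fun j _ => Real.exp_pos _) ⟨i, hRmem i⟩
      have hC : (0:ℝ) < ∑ j ∈ Finset.univ.filter (fun j => Y i ≤ Y j),
          Real.exp (t * (inner ℝ (X j) β₁ : ℝ) + u * (inner ℝ (X j) β₂ : ℝ)) :=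
        Finset.sum_pos (fun j _ => Real.exp_pos _) ⟨i, hRmem i⟩
      rw [Real.log_mul hc.ne' hA.ne', Real.log_mul hc.ne' hB.ne', Real.log_mul hc.ne' hC.ne']
      nlinarith [h1, hlogc]
    have hi₀S : i₀ ∈ Finset.univ.filter (fun i => Δ i = true) :=
      Finset.mem_filter.2 ⟨Finset.mem_univ _, hΔ₀⟩
    have hj₀R : j₀ ∈ Finset.univ.filter (fun j => Y i₀ ≤ Y j) :=
      Finset.mem_filter.2 ⟨Finset.mem_univ _, hY₀⟩
    have hdiff : (inner ℝ (X j₀) β₁ : ℝ) - (inner ℝ (X j₀) β₂ : ℝ) ≠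
        (inner ℝ (X i₀) β₁ : ℝ) - (inner ℝ (X i₀) β₂ : ℝ) := by
      intro hEq
      apply hin₀
      have e : ∀ j : Fin n, (inner ℝ (X j) β₁ : ℝ) - (inner ℝ (X j) β₂ : ℝ) =
          (inner ℝ (X j) (β₁ - β₂) : ℝ) := fun j => (inner_sub_right _ _ _).symm
      rw [e, e] at hEq
      rw [inner_sub_left, hEq, sub_self]
    have hlog_lt :
        Real.log ((1 / (n : ℝ)) * ∑ j ∈ Finset.univ.filter (fun j => Y i₀ ≤ Y j),
            Real.exp (t * (inner ℝ (X j) β₁ : ℝ) + u * (inner ℝ (X j) β₂ : ℝ))) <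
        t * Real.log ((1 / (n : ℝ)) * ∑ j ∈ Finset.univ.filter (fun j => Y i₀ ≤ Y j),
            Real.exp ((inner ℝ (X j) β₁ : ℝ))) +
        u * Real.log ((1 / (n : ℝ)) * ∑ j ∈ Finset.univ.filter (fun j => Y i₀ ≤ Y j),
            Real.exp ((inner ℝ (X j) β₂ : ℝ))) := by
      have h1 := logsumexp_lt (Finset.univ.filter (fun j => Y i₀ ≤ Y j))
        (fun j => (inner ℝ (X j) β₁ : ℝ)) (fun j => (inner ℝ (X j) β₂ : ℝ)) ht hu htu
        hj₀R (hRmem i₀) hdiff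
      have hA : (0:ℝ) < ∑ j ∈ Finset.univ.filter (fun j => Y i₀ ≤ Y j),
          Real.exp ((inner ℝ (X j) β₁ : ℝ)) :=
        Finset.sum_pos (fun j _ => Real.exp_pos _) ⟨i₀, hRmem i₀⟩
      have hB : (0:ℝ) < ∑ j ∈ Finset.univ.filter (fun j => Y i₀ ≤ Y j),
          Real.exp ((inner ℝ (X j) β₂ : ℝ)) :=
        Finset.sum_pos (fun j _ => Real.exp_pos _) ⟨i₀, hRmem i₀⟩
      have hC : (0:ℝ) < ∑ j ∈ Finset.univ.filter (fun j => Y i₀ ≤ Y j),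
          Real.exp (t * (inner ℝ (X j) β₁ : ℝ) + u * (inner ℝ (X j) β₂ : ℝ)) :=
        Finset.sum_pos (fun j _ => Real.exp_pos _) ⟨i₀, hRmem i₀⟩
      rw [Real.log_mul hc.ne' hA.ne', Real.log_mul hc.ne' hB.ne', Real.log_mul hc.ne' hC.ne']
      nlinarith [h1, hlogc]
    apply combo_sum_lt _ hc
    · intro i _
      have := hlog_le i
      linarith
    · refine ⟨i₀, hi₀S, ?_⟩
      linarith [hlog_lt]
  refine ⟨hSC, ?_⟩
  intro β₁ β₂ h₁ h₂
  by_contra hne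
  have heq : coxLogPartialLik n p Y Δ X β₁ = coxLogPartialLik n p Y Δ X β₂ :=
    le_antisymm (h₂ β₁) (h₁ β₂)
  have hmid := hSC.2 (Set.mem_univ β₁) (Set.mem_univ β₂) hne
    (by norm_num : (0:ℝ) < 1/2) (by norm_num : (0:ℝ) < 1/2) (by norm_num)
  have := h₁ ((1/2 : ℝ) • β₁ + (1/2 : ℝ) • β₂)
  rw [smul_eq_mul, smul_eq_mul, ← heq] at hmid
  linarith
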